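/- Let D ∈ ℝ[[X]] be the aeration of the Catalan generating function, i.e., the formal power series with [X^{2m}]D = C_m (the m-th Catalan number) and [X^{2m+1}]D = 0 for all m, so that D = c(X²) where c is the generating function of the Catalan numbers. Then X·D is the compositional inverse of X·(1+X²)⁻¹: substituting X·D into X·(1+X²)⁻¹ yields X. Moreover 1 + X²·D² = D, so that the Riordan array identity (c(x²), x·c(x²)) = (1/(1+x²), x/(1+x²))⁻¹ holds, i.e., (1/(1+x²), x/(1+x²))⁻¹ has first component c(X²) and second component X·c(X²). -/

import Mathlib

/-- Substitution (composition) of formal power series: `psComp h u = h ∘ u`,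
the series obtained by substituting `u` (with zero constant term) into `h`. -/
noncomputable def psComp (h u : PowerSeries ℝ) : PowerSeries ℝ :=
  PowerSeries.mk fun n =>
    ∑ k ∈ Finset.range (n + 1), PowerSeries.coeff k h * PowerSeries.coeff n (u ^ k)

open PowerSeries Finset

private lemma coeff_pow_zero_of {u : PowerSeries ℝ} (hu : constantCoeff u = 0)
    {n k : ℕ} (h : n < k) : coeff n (u ^ k) = 0 :=
  X_pow_dvd_iff.mp (pow_dvd_pow_of_dvd (X_dvd_iff.mpr hu) k) n h

private lemma coeff_psComp_eq {u : PowerSeries ℝ} (hu : constantCoeff u = 0)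
    (h : PowerSeries ℝ) {n N : ℕ} (hN : n < N) :
    coeff n (psComp h u) = ∑ k ∈ Finset.range N, coeff k h * coeff n (u ^ k) := by
  rw [psComp, coeff_mk]
  refine Finset.sum_subset (Finset.range_subset_range.mpr hN) fun k _ hk => ?_
  rw [coeff_pow_zero_of hu (by simpa using hk), mul_zero]

private lemma coeff_eval₂ {u : PowerSeries ℝ} (hu : constantCoeff u = 0)
    (p : Polynomial ℝ) (n : ℕ) :
    coeff n (p.eval₂ C u) =
      ∑ k ∈ Finset.range (n + 1), p.coeff k * coeff n (u ^ k) := by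
  have hd : p.natDegree < max (n + 1) (p.natDegree + 1) :=
    lt_of_lt_of_le (Nat.lt_succ_self _) (le_max_right _ _)
  rw [Polynomial.eval₂_eq_sum_range' _ hd u, map_sum]
  calc ∑ k ∈ Finset.range (max (n + 1) (p.natDegree + 1)),
        coeff n (C (p.coeff k) * u ^ k)
      = ∑ k ∈ Finset.range (max (n + 1) (p.natDegree + 1)),
        p.coeff k * coeff n (u ^ k) :=
        Finset.sum_congr rfl fun k _ => by rw [coeff_C_mul]
    _ = ∑ k ∈ Finset.range (n + 1), p.coeff k * coeff n (u ^ k) := by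
        refine (Finset.sum_subset (Finset.range_subset_range.mpr (le_max_left _ _))
          fun k _ hk => ?_).symm
        rw [coeff_pow_zero_of hu (by simpa using hk), mul_zero]

private lemma psComp_mul {u : PowerSeries ℝ} (hu : constantCoeff u = 0)
    (g h : PowerSeries ℝ) : psComp (g * h) u = psComp g u * psComp h u := by
  ext n
  have key : ∀ f : PowerSeries ℝ, ∀ i ≤ n,
      coeff i ((trunc (n + 1) f).eval₂ C u) = coeff i (psComp f u) := by
    intro f i hi
    rw [coeff_eval₂ hu, coeff_psComp_eq hu f (Nat.lt_succ_self i)]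
    refine Finset.sum_congr rfl fun k hk => ?_
    rw [coeff_trunc, if_pos (by have := Finset.mem_range.mp hk; omega)]
  calc coeff n (psComp (g * h) u)
      = ∑ k ∈ Finset.range (n + 1),
          (trunc (n + 1) g * trunc (n + 1) h).coeff k * coeff n (u ^ k) := by
        rw [psComp, coeff_mk]
        refine Finset.sum_congr rfl fun k hk => ?_
        rw [coeff_mul_eq_coeff_trunc_mul_trunc g h (Finset.mem_range.mp hk),
          ← Polynomial.coe_mul, Polynomial.coeff_coe]
    _ = coeff n ((trunc (n + 1) g * trunc (n + 1) h).eval₂ C u) :=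
        (coeff_eval₂ hu _ n).symm
    _ = coeff n ((trunc (n + 1) g).eval₂ C u * (trunc (n + 1) h).eval₂ C u) := by
        rw [Polynomial.eval₂_mul]
    _ = coeff n (psComp g u * psComp h u) := by
        rw [PowerSeries.coeff_mul, PowerSeries.coeff_mul]
        refine Finset.sum_congr rfl fun p hp => ?_
        have hps := Finset.HasAntidiagonal.mem_antidiagonal.mp hp
        rw [key g p.1 (by omega), key h p.2 (by omega)]

private lemma psComp_one (u : PowerSeries ℝ) : psComp 1 u = 1 := by
  ext n
  rw [psComp, coeff_mk, Finset.sum_eq_single 0]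
  · simp
  · intro k _ hk
    simp [PowerSeries.coeff_one, hk]
  · simp

private lemma psComp_X {u : PowerSeries ℝ} (hu : constantCoeff u = 0) :
    psComp PowerSeries.X u = u := by
  ext n
  rw [psComp, coeff_mk, Finset.sum_eq_single 1]
  · simp
  · intro k _ hk
    simp [PowerSeries.coeff_X, hk]
  · intro h1
    have hn : n = 0 := by simpa using h1
    subst hn
    simp [PowerSeries.coeff_zero_eq_constantCoeff, hu]

private lemma psComp_add (g h u : PowerSeries ℝ) :
    psComp (g + h) u = psComp g u + psComp h u := by
  ext n
  simp [psComp, coeff_mk, add_mul, Finset.sum_add_distrib]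

private lemma sum_range_even (f : ℕ → ℝ) (hf : ∀ i, f (2 * i + 1) = 0) (m : ℕ) :
    ∑ j ∈ Finset.range (2 * m + 1), f j = ∑ i ∈ Finset.range (m + 1), f (2 * i) := by
  induction m with
  | zero => simp
  | succ m ih =>
    have h1 : 2 * (m + 1) + 1 = (2 * m + 1) + 1 + 1 := by ring
    have h2 : 2 * m + 1 + 1 = 2 * (m + 1) := by ring
    rw [h1, Finset.sum_range_succ, Finset.sum_range_succ, ih, hf m, add_zero, h2,
      Finset.sum_range_succ (fun i => f (2 * i)) (m + 1),
      Finset.sum_range_succ (fun i => f (2 * i)) m]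

/-- Let `D = c(x²)` be the aeration of the Catalan generating function. Then
`x·D` is the compositional inverse of `x/(1+x²)`, `1 + x²·D² = D`, and hence the
Riordan array identity `(c(x²), x·c(x²)) = (1/(1+x²), x/(1+x²))⁻¹` holds: the first
component of the inverse, `1/((1/(1+x²))∘(x·D))`, equals `c(x²) = D`. -/
theorem aerated_catalan_riordan_inverse (D : PowerSeries ℝ)
    (hDeven : ∀ m : ℕ, PowerSeries.coeff (2 * m) D = (catalan m : ℝ))
    (hDodd : ∀ m : ℕ, PowerSeries.coeff (2 * m + 1) D = 0) :
    psComp (PowerSeries.X * (1 + PowerSeries.X ^ 2)⁻¹) (PowerSeries.X * D) =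
      PowerSeries.X ∧
    1 + PowerSeries.X ^ 2 * D ^ 2 = D ∧
    (psComp (1 + PowerSeries.X ^ 2)⁻¹ (PowerSeries.X * D))⁻¹ = D := by
  have hu : constantCoeff (PowerSeries.X * D) = 0 := by simp
  have hD0 : constantCoeff D = 1 := by
    have h := hDeven 0
    simpa using h
  have hodd : ∀ j, Odd j → coeff j D = 0 := by
    rintro j ⟨k, hk⟩
    subst hk
    exact hDodd k
  -- the key identity 1 + X² D² = D
  have hkey : (1 : PowerSeries ℝ) + PowerSeries.X ^ 2 * D ^ 2 = D := by
    ext n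
    rw [map_add]
    rcases Nat.even_or_odd n with he | ho
    · obtain ⟨m, hm⟩ := he
      have hn : n = 2 * m := by omega
      subst hn
      cases m with
      | zero => simp [hD0]
      | succ m' =>
        rw [PowerSeries.coeff_one, if_neg (by omega)]
        have e1 : 2 * (m' + 1) = 2 * m' + 2 := by ring
        rw [e1, PowerSeries.coeff_X_pow_mul, pow_two, PowerSeries.coeff_mul,
          Finset.Nat.sum_antidiagonal_eq_sum_range_succ_mk]
        have hf : ∀ i, coeff (2 * i + 1) D * coeff (2 * m' - (2 * i + 1)) D = 0 :=
          fun i => by rw [hDodd i, zero_mul]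
        rw [show (∑ k ∈ Finset.range (2 * m' + 1), coeff k D * coeff (2 * m' - k) D)
            = ∑ i ∈ Finset.range (m' + 1), coeff (2 * i) D * coeff (2 * m' - 2 * i) D
          from sum_range_even _ hf m']
        have hterm : ∀ i ∈ Finset.range (m' + 1),
            coeff (2 * i) D * coeff (2 * m' - 2 * i) D
              = (catalan i : ℝ) * (catalan (m' - i) : ℝ) := by
          intro i hi
          have hii := Finset.mem_range.mp hi
          have h2 : 2 * m' - 2 * i = 2 * (m' - i) := by omega
          rw [h2, hDeven, hDeven]
        rw [Finset.sum_congr rfl hterm, show 2 * m' + 2 = 2 * (m' + 1) by ring, hDeven,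
          catalan_succ', Finset.Nat.sum_antidiagonal_eq_sum_range_succ_mk]
        push_cast
        ring
    · obtain ⟨m, hm⟩ := ho
      subst hm
      rw [PowerSeries.coeff_one, if_neg (by omega), hDodd m, zero_add]
      cases m with
      | zero =>
        exact X_pow_dvd_iff.mp (dvd_mul_right _ _) 1 one_lt_two
      | succ k =>
        have e : 2 * (k + 1) + 1 = (2 * k + 1) + 2 := by ring
        rw [e, PowerSeries.coeff_X_pow_mul, pow_two, PowerSeries.coeff_mul]
        refine Finset.sum_eq_zero fun p hp => ?_
        have hps := Finset.HasAntidiagonal.mem_antidiagonal.mp hp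
        rcases Nat.even_or_odd p.1 with ⟨r, hr⟩ | ho1
        · have hp2 : Odd p.2 := ⟨k - r, by omega⟩
          rw [hodd _ hp2, mul_zero]
        · rw [hodd _ ho1, zero_mul]
  have hconst2 : constantCoeff (1 + PowerSeries.X ^ 2 : PowerSeries ℝ) ≠ 0 := by simp
  have h2 : psComp (1 + PowerSeries.X ^ 2) (PowerSeries.X * D) = D := by
    have e : (1 + PowerSeries.X ^ 2 : PowerSeries ℝ)
        = 1 + PowerSeries.X * PowerSeries.X := by ring
    rw [e, psComp_add, psComp_one, psComp_mul hu, psComp_X hu,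
      show (PowerSeries.X * D) * (PowerSeries.X * D) = PowerSeries.X ^ 2 * D ^ 2 by ring, hkey]
  have hS : psComp (1 + PowerSeries.X ^ 2)⁻¹ (PowerSeries.X * D) * D = 1 := by
    calc psComp (1 + PowerSeries.X ^ 2)⁻¹ (PowerSeries.X * D) * D
        = psComp (1 + PowerSeries.X ^ 2)⁻¹ (PowerSeries.X * D)
            * psComp (1 + PowerSeries.X ^ 2) (PowerSeries.X * D) := by rw [h2]
      _ = psComp ((1 + PowerSeries.X ^ 2)⁻¹ * (1 + PowerSeries.X ^ 2)) (PowerSeries.X * D) :=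
          (psComp_mul hu _ _).symm
      _ = 1 := by rw [PowerSeries.inv_mul_cancel _ hconst2, psComp_one]
  refine ⟨?_, hkey, ?_⟩
  · rw [psComp_mul hu, psComp_X hu, mul_assoc,
      mul_comm D (psComp (1 + PowerSeries.X ^ 2)⁻¹ (PowerSeries.X * D)), hS, mul_one]
  · have hSc : constantCoeff (psComp (1 + PowerSeries.X ^ 2)⁻¹ (PowerSeries.X * D)) ≠ 0 := by
      intro h0
      have hc := congrArg (constantCoeff) hS
      rw [map_mul, h0, zero_mul] at hc
      simp at hc
    exact (PowerSeries.inv_eq_iff_mul_eq_one hSc).mpr (by rw [mul_comm]; exact hS)
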